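/- arXiv:2209.08029 — 2 statements merged into one kernel-verified Lean document; each statement's English description precedes it below -/
import Mathlib

section
/- Let G be a finite simple graph and S ⊆ V(G). Let K_1, …, K_s be the nonempty independent subsets of the induced subgraph G[S]. Then I(G - S, x) - I(G, x) = Σ_{i=1}^{s} (Π_{v ∈ K_i} x_v) · I(G - N_G[K_i], x), where N_G[K] = K ∪ (∪_{v∈K} N_G(v)). -/
/-- `S` is an independent set of `G`. -/
def IsIndepSet {W : Type*} (G : SimpleGraph W) (S : Set W) : Prop :=
  ∀ u ∈ S, ∀ v ∈ S, ¬ G.Adj u v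

open Classical in
/-- The multivariate independence polynomial of the induced subgraph `G - T`
(sum over independent sets avoiding `T`), viewed in `ℂ[x_v : v ∈ V(G)]`. -/
noncomputable def Iav {W : Type*} [Fintype W] (G : SimpleGraph W) (T : Set W) :
    MvPolynomial W ℂ :=
  ∑ S ∈ Finset.univ.filter
      (fun S : Finset W => IsIndepSet G ↑S ∧ ∀ x ∈ S, x ∉ T),
    (-1 : MvPolynomial W ℂ) ^ S.card * ∏ v ∈ S, MvPolynomial.X v

/-- The closed neighborhood `N_G[K]` of a set `K`. -/
def closedNbhd {W : Type*} (G : SimpleGraph W) (K : Set W) : Set W :=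
  K ∪ {z | ∃ w ∈ K, G.Adj w z}

lemma aux_sum_pow {R : Type*} [CommRing R] {α : Type*} [DecidableEq α]
    {M : Finset α} (hM : M.Nonempty) :
    ∑ K ∈ M.powerset.filter Finset.Nonempty, (-1 : R) ^ K.card = -1 := by
  have h0 : (∑ K ∈ M.powerset, (-1 : R) ^ K.card) = 0 := by
    have := Finset.sum_powerset_neg_one_pow_card_of_nonempty (x := M) hM
    have := congrArg (fun z : ℤ => (z : R)) this
    push_cast at this
    simpa using this
  have hsplit := Finset.sum_filter_add_sum_filter_not M.powerset
    (fun K => K.Nonempty) (fun K => (-1 : R) ^ K.card)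
  have hnot : M.powerset.filter (fun K => ¬ K.Nonempty) = {∅} := by
    ext K
    simp [Finset.not_nonempty_iff_eq_empty]
    rintro rfl; exact Finset.empty_subset _
  rw [h0, hnot] at hsplit
  simp at hsplit
  linear_combination hsplit

open Classical in
/-- The multivariate fundamental identity: for `S ⊆ V(G)`,
`I(G-S,x) - I(G,x) = Σ_K (Π_{v∈K} x_v) I(G - N_G[K], x)`, where `K` runs over the
nonempty independent subsets of the induced subgraph `G[S]`. -/
theorem stmt_2 {V : Type*} [Fintype V] [DecidableEq V] (G : SimpleGraph V)
    (S : Finset V) :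
    Iav G (↑S : Set V) - Iav G (∅ : Set V) =
      ∑ K ∈ S.powerset.filter (fun K => K.Nonempty ∧ IsIndepSet G ↑K),
        (∏ v ∈ K, MvPolynomial.X v) * Iav G (closedNbhd G ↑K) := by
  classical
  rw [show (S.powerset >>= fun a => pure ((↑a : Set V))) =
        S.powerset.image (fun a : Finset V => (↑a : Set V)) from Finset.sup_singleton_apply _ _,
      Finset.filter_image,
      Finset.sum_image (by intro x _ y _ h; exact Finset.coe_injective h)]
  simp only [Finset.toFinset_coe, Finset.coe_nonempty]
  set R := MvPolynomial V ℂ with hR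
  set 𝒜 : Finset (Finset V) :=
    Finset.univ.filter (fun A : Finset V => IsIndepSet G ↑A ∧ (A ∩ S).Nonempty) with h𝒜
  -- Step 1: LHS
  have hLHS : Iav G (↑S : Set V) - Iav G (∅ : Set V) =
      ∑ A ∈ 𝒜, -((-1 : R) ^ A.card * ∏ v ∈ A, MvPolynomial.X v) := by
    have hIE : Iav G (∅ : Set V) =
        ∑ A ∈ Finset.univ.filter (fun A : Finset V => IsIndepSet G ↑A),
          (-1 : R) ^ A.card * ∏ v ∈ A, MvPolynomial.X v := by
      unfold Iav
      apply Finset.sum_congr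
      · ext A; simp
      · intros; rfl
    have hS : Iav G (↑S : Set V) =
        ∑ A ∈ Finset.univ.filter
            (fun A : Finset V => IsIndepSet G ↑A ∧ ¬ (A ∩ S).Nonempty),
          (-1 : R) ^ A.card * ∏ v ∈ A, MvPolynomial.X v := by
      unfold Iav
      apply Finset.sum_congr
      · ext A
        simp [Finset.not_nonempty_iff_eq_empty, Finset.eq_empty_iff_forall_notMem,
          Finset.mem_inter]
      · intros; rfl
    have hsplit := Finset.sum_filter_add_sum_filter_not
      (Finset.univ.filter (fun A : Finset V => IsIndepSet G ↑A))
      (fun A => (A ∩ S).Nonempty)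
      (fun A => (-1 : R) ^ A.card * ∏ v ∈ A, MvPolynomial.X v)
    rw [Finset.filter_filter, Finset.filter_filter] at hsplit
    rw [hIE, hS, ← hsplit, h𝒜]
    simp only [Finset.sum_neg_distrib, Finset.filter_congr_decidable]
    ring
  rw [hLHS]
  -- Step 2: expand the RHS into a sum over a sigma type
  set 𝒦 : Finset (Finset V) :=
    S.powerset.filter (fun K => K.Nonempty ∧ IsIndepSet G ↑K) with h𝒦
  set ℬ : Finset V → Finset (Finset V) := fun K =>
    Finset.univ.filter
      (fun B : Finset V => IsIndepSet G ↑B ∧ ∀ x ∈ B, x ∉ closedNbhd G ↑K) with hℬ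
  have hRHS : ∑ K ∈ 𝒦, (∏ v ∈ K, MvPolynomial.X v) * Iav G (closedNbhd G ↑K) =
      ∑ p ∈ 𝒦.sigma ℬ,
        (∏ v ∈ p.1, MvPolynomial.X v) *
          ((-1 : R) ^ p.2.card * ∏ v ∈ p.2, MvPolynomial.X v) := by
    rw [Finset.sum_sigma]
    apply Finset.sum_congr rfl
    intro K _
    rw [Iav, Finset.mul_sum]
    apply Finset.sum_congr
    · ext B; simp [hℬ]
    · intros; rfl
  rw [hRHS]
  -- Step 3: reindex the sigma sum by (A, K) with A = K ∪ B
  have hbij : ∑ p ∈ 𝒦.sigma ℬ,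
      (∏ v ∈ p.1, MvPolynomial.X v) *
        ((-1 : R) ^ p.2.card * ∏ v ∈ p.2, MvPolynomial.X v) =
      ∑ p ∈ 𝒜.sigma (fun A => (A ∩ S).powerset.filter Finset.Nonempty),
        (-1 : R) ^ (p.1 \ p.2).card * ∏ v ∈ p.1, MvPolynomial.X v := by
    apply Finset.sum_nbij' (fun p => ⟨p.1 ∪ p.2, p.1⟩) (fun p => ⟨p.2, p.1 \ p.2⟩)
    · -- forward membership
      rintro ⟨K, B⟩ hp
      simp only [Finset.mem_sigma, h𝒦, hℬ, Finset.mem_filter, Finset.mem_powerset,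
        Finset.mem_univ, true_and] at hp
      obtain ⟨⟨hKS, hKne, hKind⟩, hBind, hBav⟩ := hp
      have hKB : ∀ x ∈ K, x ∉ B := by
        intro x hx hxB
        exact hBav x hxB (Or.inl (by exact_mod_cast hx))
      simp only [Finset.mem_sigma, h𝒜, Finset.mem_filter, Finset.mem_univ, true_and,
        Finset.mem_powerset]
      refine ⟨⟨?_, ?_⟩, ?_, hKne⟩
      · -- K ∪ B independent
        intro u hu v hv hadj
        simp only [Finset.coe_union, Set.mem_union, Finset.mem_coe] at hu hv
        rcases hu with hu | hu <;> rcases hv with hv | hv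
        · exact hKind u (by exact_mod_cast hu) v (by exact_mod_cast hv) hadj
        · exact hBav v hv (Or.inr ⟨u, by exact_mod_cast hu, hadj⟩)
        · exact hBav u hu (Or.inr ⟨v, by exact_mod_cast hv, hadj.symm⟩)
        · exact hBind u (by exact_mod_cast hu) v (by exact_mod_cast hv) hadj
      · -- (K ∪ B) ∩ S nonempty
        obtain ⟨k, hk⟩ := hKne
        exact ⟨k, Finset.mem_inter.mpr ⟨Finset.mem_union_left _ hk, hKS hk⟩⟩
      · -- K ⊆ (K ∪ B) ∩ S
        intro k hk
        exact Finset.mem_inter.mpr ⟨Finset.mem_union_left _ hk, hKS hk⟩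
    · -- backward membership
      rintro ⟨A, K⟩ hp
      simp only [Finset.mem_sigma, h𝒜, Finset.mem_filter, Finset.mem_univ, true_and,
        Finset.mem_powerset] at hp
      obtain ⟨⟨hAind, _⟩, hKAS, hKne⟩ := hp
      have hKA : K ⊆ A := hKAS.trans Finset.inter_subset_left
      simp only [Finset.mem_sigma, h𝒦, hℬ, Finset.mem_filter, Finset.mem_powerset,
        Finset.mem_univ, true_and]
      refine ⟨⟨hKAS.trans Finset.inter_subset_right, hKne, ?_⟩, ?_, ?_⟩
      · intro u hu v hv hadj
        exact hAind u (hKA (by exact_mod_cast hu)) v (hKA (by exact_mod_cast hv)) hadj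
      · intro u hu v hv hadj
        simp only [Finset.coe_sdiff, Set.mem_diff, Finset.mem_coe] at hu hv
        exact hAind u (by exact hu.1) v (by exact hv.1) hadj
      · intro x hx hxN
        rw [Finset.mem_sdiff] at hx
        rcases hxN with hxK | ⟨w, hwK, hadj⟩
        · exact hx.2 (by exact_mod_cast hxK)
        · exact hAind w (hKA (by exact_mod_cast hwK)) x hx.1 hadj
    · -- left inverse
      rintro ⟨K, B⟩ hp
      simp only [Finset.mem_sigma, h𝒦, hℬ, Finset.mem_filter, Finset.mem_powerset,
        Finset.mem_univ, true_and] at hp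
      obtain ⟨_, _, hBav⟩ := hp
      have hdisj : Disjoint K B := Finset.disjoint_left.mpr (by
        intro a haK haB
        exact hBav a haB (Or.inl (by exact_mod_cast haK)))
      rw [Finset.union_sdiff_cancel_left hdisj]
    · -- right inverse
      rintro ⟨A, K⟩ hp
      simp only [Finset.mem_sigma, h𝒜, Finset.mem_filter, Finset.mem_univ, true_and,
        Finset.mem_powerset] at hp
      have hKA : K ⊆ A := hp.2.1.trans Finset.inter_subset_left
      rw [Finset.union_sdiff_of_subset hKA]
    · -- term equality
      rintro ⟨K, B⟩ hp
      simp only [Finset.mem_sigma, h𝒦, hℬ, Finset.mem_filter, Finset.mem_powerset,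
        Finset.mem_univ, true_and] at hp
      obtain ⟨_, _, hBav⟩ := hp
      have hdisj : Disjoint K B := Finset.disjoint_left.mpr (by
        intro a haK haB
        exact hBav a haB (Or.inl (by exact_mod_cast haK)))
      simp only [Finset.union_sdiff_cancel_left hdisj, Finset.prod_union hdisj]
      ring
  rw [hbij, Finset.sum_sigma]
  -- Step 4: evaluate the inner sum
  apply Finset.sum_congr rfl
  intro A hA
  simp only [h𝒜, Finset.mem_filter, Finset.mem_univ, true_and] at hA
  have hstep : ∀ K ∈ (A ∩ S).powerset.filter Finset.Nonempty,
      (-1 : R) ^ (A \ K).card * ∏ v ∈ A, MvPolynomial.X v =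
      ((-1 : R) ^ A.card * (-1 : R) ^ K.card) * ∏ v ∈ A, MvPolynomial.X v := by
    intro K hK
    simp only [Finset.mem_filter, Finset.mem_powerset] at hK
    have hKA : K ⊆ A := hK.1.trans Finset.inter_subset_left
    rw [Finset.card_sdiff_of_subset hKA]
    congr 1
    have h2 : A.card = (A.card - K.card) + K.card :=
      (Nat.sub_add_cancel (Finset.card_le_card hKA)).symm
    calc (-1 : R) ^ (A.card - K.card)
        = (-1 : R) ^ (A.card - K.card) * ((-1 : R) ^ K.card * (-1 : R) ^ K.card) := by
          rw [← pow_add, ← two_mul, pow_mul]; norm_num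
      _ = ((-1 : R) ^ ((A.card - K.card) + K.card)) * (-1 : R) ^ K.card := by
          rw [pow_add]; ring
      _ = (-1 : R) ^ A.card * (-1 : R) ^ K.card := by rw [← h2]
  rw [Finset.sum_congr rfl hstep]
  have : ∑ K ∈ (A ∩ S).powerset.filter Finset.Nonempty,
      ((-1 : R) ^ A.card * (-1 : R) ^ K.card) * ∏ v ∈ A, MvPolynomial.X v =
      ((-1 : R) ^ A.card * ∑ K ∈ (A ∩ S).powerset.filter Finset.Nonempty,
        (-1 : R) ^ K.card) * ∏ v ∈ A, MvPolynomial.X v := by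
    rw [Finset.mul_sum, Finset.sum_mul]
  rw [this, aux_sum_pow hA.2]
  ring
end

section
/- Let G be a finite simple connected graph with a fixed total order on V(G), u ∈ V(G), and (T_G, u') its stable-path tree rooted at u with labeling ℓ_G : V(T_G) → V(G). Then the multivariate Godsil identity holds: I(G - u, x) · ℓ_G(I(T_G, x)) = I(G, x) · ℓ_G(I(T_G - u', x)), where ℓ_G applied to a polynomial in variables {x_w : w ∈ V(T_G)} substitutes x_w ↦ x_{ℓ_G(w)}. -/
/-- The set of vertices reachable from `w` by walks of `G` staying inside `B`
(the connected component of `w` in the induced subgraph `G[B]`). -/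
def compIn {V : Type*} (G : SimpleGraph V) (B : Set V) (w : V) : Set V :=
  {y | ∃ p : G.Walk w y, ∀ z ∈ p.support, z ∈ B}

/-- Given the available vertex set `B`, the current vertex `x` and a chosen
neighbour `w`, the vertex set of the connected component `G_i` of
`G[B] − ({x} ∪ {smaller neighbours of x})` containing `w`. -/
def nextSet {V : Type*} [LinearOrder V] (G : SimpleGraph V) (B : Set V) (x w : V) :
    Set V :=
  compIn G (B \ ({x} ∪ {z ∈ B | G.Adj x z ∧ z < w})) w

/-- `sptFrom G B x rest` says that `rest` is a valid continuation of a stable path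
currently ending at `x`, with available vertex set `B`. -/
def sptFrom {V : Type*} [LinearOrder V] (G : SimpleGraph V) :
    Set V → V → List V → Prop
  | _, _, [] => True
  | B, x, w :: rest => G.Adj x w ∧ w ∈ B ∧ sptFrom G (nextSet G B x w) w rest

/-- `p` is a stable path of `G` starting at `u`. -/
def StablePath {V : Type*} [LinearOrder V] (G : SimpleGraph V) (u : V)
    (p : List V) : Prop :=
  ∃ rest, p = u :: rest ∧ sptFrom G Set.univ u rest

/-- The vertex set of the stable-path tree `T_G` rooted at `u`: stable paths
starting at `u` (all of which have pairwise distinct entries). -/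
def SPVert {V : Type*} [LinearOrder V] (G : SimpleGraph V) (u : V) :=
  {p : List V // p.Nodup ∧ StablePath G u p}

noncomputable instance {V : Type*} [Fintype V] [DecidableEq V] [LinearOrder V]
    (G : SimpleGraph V) (u : V) : Fintype (SPVert G u) :=
  Fintype.ofInjective (fun p => (⟨p.1, p.2.1⟩ : {l : List V // l.Nodup}))
    (by rintro ⟨a, ha⟩ ⟨b, hb⟩ h; exact Subtype.ext (by simpa [Subtype.ext_iff] using h))

/-- The stable-path tree `T_G` of `G` rooted at `u`: a stable path is joined to
each of its one-step extensions. -/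
def SPT {V : Type*} [LinearOrder V] (G : SimpleGraph V) (u : V) :
    SimpleGraph (SPVert G u) :=
  SimpleGraph.fromRel (fun p q => q.1.length = p.1.length + 1 ∧ p.1 <+: q.1)

/-- The root `u'` of the stable-path tree. -/
def SPTroot {V : Type*} [LinearOrder V] (G : SimpleGraph V) (u : V) : SPVert G u :=
  ⟨[u], by simp, ⟨[], rfl, trivial⟩⟩

/-- The labeling map `ℓ_G : V(T_G) → V(G)` sending a stable path to its last vertex. -/
def SPTlabel {V : Type*} [LinearOrder V] {G : SimpleGraph V} {u : V}
    (p : SPVert G u) : V :=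
  p.1.getLast (by obtain ⟨-, rest, h, -⟩ := p.2; simp [h])

set_option linter.unusedSectionVars false
section IavLemmas

open MvPolynomial Classical

variable {W : Type*} [Fintype W] (H : SimpleGraph W)

/-- abbreviation for the summand. -/
noncomputable def Fterm (S : Finset W) : MvPolynomial W ℂ :=
  (-1 : MvPolynomial W ℂ) ^ S.card * ∏ v ∈ S, MvPolynomial.X v

open Classical in
lemma Iav_def (T : Set W) :
    Iav H T = ∑ S ∈ Finset.univ.filter
      (fun S : Finset W => IsIndepSet H ↑S ∧ ∀ x ∈ S, x ∉ T), Fterm S := rfl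

lemma IsIndepSet.subset {S S' : Set W} (h : IsIndepSet H S) (hs : S' ⊆ S) :
    IsIndepSet H S' := fun a ha b hb => h a (hs ha) b (hs hb)

lemma isIndepSet_empty : IsIndepSet H (↑(∅ : Finset W)) := by
  intro a ha; simp at ha

open Classical in
lemma constantCoeff_Fterm (S : Finset W) :
    MvPolynomial.constantCoeff (Fterm S) = if S = ∅ then 1 else 0 := by
  unfold Fterm
  rw [map_mul, map_pow, map_neg, map_one, map_prod]
  by_cases h : S = ∅
  · simp [h]
  · obtain ⟨a, ha⟩ := Finset.nonempty_iff_ne_empty.2 h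
    rw [Finset.prod_eq_zero ha (by simp)]
    simp [h]

open Classical in
lemma constantCoeff_Iav (T : Set W) : MvPolynomial.constantCoeff (Iav H T) = 1 := by
  rw [Iav_def, map_sum]
  rw [Finset.sum_eq_single (∅ : Finset W)]
  · simp [constantCoeff_Fterm]
  · intro S hS hne; rw [constantCoeff_Fterm]; simp [hne]
  · intro h
    exact absurd (Finset.mem_filter.2 ⟨Finset.mem_univ _,
      isIndepSet_empty H, by simp⟩) h

lemma Iav_ne_zero (T : Set W) : Iav H T ≠ 0 := by
  intro h
  have := constantCoeff_Iav H T
  rw [h] at this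
  simp at this

open Classical in
lemma Iav_of_full {T : Set W} (h : ∀ a : W, a ∈ T) : Iav H T = 1 := by
  rw [Iav_def]
  rw [Finset.sum_eq_single (∅ : Finset W)]
  · simp [Fterm]
  · intro S hS hne
    obtain ⟨a, ha⟩ := Finset.nonempty_iff_ne_empty.2 hne
    rw [Finset.mem_filter] at hS
    exact absurd (h a) (hS.2.2 a ha)
  · intro hn
    exact absurd (Finset.mem_filter.2 ⟨Finset.mem_univ _,
      isIndepSet_empty H, by simp⟩) hn

end IavLemmas
set_option linter.unusedSectionVars false
section IavLemmas2

open MvPolynomial Classical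

variable {W : Type*} [Fintype W] (H : SimpleGraph W)

open Classical in
lemma Iav_deletion (T : Set W) (a : W) (ha : a ∉ T) :
    Iav H T = Iav H (insert a T)
      - MvPolynomial.X a * Iav H (T ∪ {b | b = a ∨ H.Adj a b}) := by
  have key : Iav H T = (∑ S ∈ (Finset.univ.filter
        (fun S : Finset W => IsIndepSet H ↑S ∧ ∀ x ∈ S, x ∉ T)).filter
        (fun S => a ∈ S), Fterm S)
      + ∑ S ∈ (Finset.univ.filter
        (fun S : Finset W => IsIndepSet H ↑S ∧ ∀ x ∈ S, x ∉ T)).filter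
        (fun S => ¬ a ∈ S), Fterm S := by
    rw [Iav_def, Finset.sum_filter_add_sum_filter_not]
  have h1 : (∑ S ∈ (Finset.univ.filter
        (fun S : Finset W => IsIndepSet H ↑S ∧ ∀ x ∈ S, x ∉ T)).filter
        (fun S => ¬ a ∈ S), Fterm S) = Iav H (insert a T) := by
    rw [Iav_def]
    apply Finset.sum_congr ?_ (fun _ _ => rfl)
    ext S
    simp only [Finset.mem_filter, Finset.mem_univ, true_and]
    constructor
    · rintro ⟨⟨hi, hT⟩, haS⟩
      refine ⟨hi, fun x hx => ?_⟩
      simp only [Set.mem_insert_iff, not_or]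
      exact ⟨fun h => haS (h ▸ hx), hT x hx⟩
    · rintro ⟨hi, hT⟩
      refine ⟨⟨hi, fun x hx hxt => (hT x hx) (Set.mem_insert_of_mem _ hxt)⟩, ?_⟩
      intro haS
      exact (hT a haS) (Set.mem_insert _ _)
  have h2 : (∑ S ∈ (Finset.univ.filter
        (fun S : Finset W => IsIndepSet H ↑S ∧ ∀ x ∈ S, x ∉ T)).filter
        (fun S => a ∈ S), Fterm S)
      = - (MvPolynomial.X a * Iav H (T ∪ {b | b = a ∨ H.Adj a b})) := by
    rw [Iav_def, Finset.mul_sum, ← Finset.sum_neg_distrib]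
    refine Finset.sum_bij' (fun S _ => S.erase a) (fun S _ => insert a S) ?_ ?_ ?_ ?_ ?_
    · intro S hS
      simp only [Finset.mem_filter, Finset.mem_univ, true_and] at hS ⊢
      obtain ⟨⟨hi, hT⟩, haS⟩ := hS
      refine ⟨hi.subset H (fun z hz =>
        Finset.mem_coe.2 (Finset.mem_of_mem_erase (Finset.mem_coe.1 hz))), ?_⟩
      intro x hx
      rw [Finset.mem_erase] at hx
      simp only [Set.mem_union, Set.mem_setOf_eq, not_or]
      exact ⟨hT x hx.2, hx.1, fun h => hi a haS x hx.2 h⟩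
    · intro S hS
      simp only [Finset.mem_filter, Finset.mem_univ, true_and] at hS ⊢
      obtain ⟨hi, hT⟩ := hS
      have haS : a ∉ S := fun h => (hT a h) (Set.mem_union_right _ (Or.inl rfl))
      refine ⟨⟨?_, ?_⟩, Finset.mem_insert_self a S⟩
      · intro z hz w hw
        simp only [Finset.coe_insert, Set.mem_insert_iff] at hz hw
        rcases hz with rfl | hz <;> rcases hw with rfl | hw
        · exact H.irrefl
        · have := hT w hw; simp only [Set.mem_union, Set.mem_setOf_eq, not_or] at this
          exact this.2.2
        · have := hT z hz; simp only [Set.mem_union, Set.mem_setOf_eq, not_or] at this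
          exact fun h => this.2.2 h.symm
        · exact hi z hz w hw
      · intro x hx
        rw [Finset.mem_insert] at hx
        rcases hx with rfl | hx
        · exact ha
        · have := hT x hx; simp only [Set.mem_union, Set.mem_setOf_eq, not_or] at this
          exact this.1
    · intro S hS
      simp only [Finset.mem_filter] at hS
      exact Finset.insert_erase hS.2
    · intro S hS
      simp only [Finset.mem_filter, Finset.mem_univ, true_and] at hS
      have haS : a ∉ S := fun h => (hS.2 a h) (Set.mem_union_right _ (Or.inl rfl))
      exact Finset.erase_insert haS
    · intro S hS
      simp only [Finset.mem_filter] at hS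
      have haS : a ∈ S := hS.2
      have hcard : S.card = (S.erase a).card + 1 := (Finset.card_erase_add_one haS).symm
      unfold Fterm
      rw [← Finset.prod_erase_mul _ _ haS, hcard, pow_succ]
      ring
  rw [key, h1, h2, neg_add_eq_sub]

end IavLemmas2
set_option linter.unusedSectionVars false
section IavLemmas3

open MvPolynomial Classical

variable {W : Type*} [Fintype W] (H : SimpleGraph W)

open Classical in
lemma Fterm_union {S₁ S₂ : Finset W} (h : Disjoint S₁ S₂) :
    Fterm (S₁ ∪ S₂) = Fterm S₁ * Fterm S₂ := by
  unfold Fterm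
  rw [Finset.card_union_of_disjoint h, Finset.prod_union h, pow_add]
  ring

open Classical in
lemma Iav_split (T A Bs : Set W) (hd : ∀ a ∈ A, a ∉ Bs)
    (he : ∀ a ∈ A, ∀ b ∈ Bs, ¬H.Adj a b)
    (hT : ∀ z, z ∉ T ↔ z ∈ A ∨ z ∈ Bs) :
    Iav H T = Iav H Aᶜ * Iav H Bsᶜ := by
  rw [Iav_def, Iav_def, Iav_def, Finset.sum_mul_sum, ← Finset.sum_product']
  refine Finset.sum_bij' (fun S _ => (S.filter (· ∈ A), S.filter (· ∈ Bs)))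
    (fun P _ => P.1 ∪ P.2) ?_ ?_ ?_ ?_ ?_
  · intro S hS
    simp only [Finset.mem_filter, Finset.mem_univ, true_and] at hS
    obtain ⟨hi, hTS⟩ := hS
    rw [Finset.mem_product]
    constructor <;>
    · simp only [Finset.mem_filter, Finset.mem_univ, true_and]
      refine ⟨hi.subset H (fun z hz => by
        simp only [Finset.coe_filter, Set.mem_setOf_eq] at hz
        exact hz.1), ?_⟩
      intro x hx
      simp only [Set.mem_compl_iff, not_not]
      exact hx.2
  · intro P hP
    rw [Finset.mem_product] at hP
    simp only [Finset.mem_filter, Finset.mem_univ, true_and] at hP ⊢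
    obtain ⟨⟨hi1, h1⟩, ⟨hi2, h2⟩⟩ := hP
    have hP1 : ∀ x ∈ P.1, x ∈ A := fun x hx => by
      have := h1 x hx; simpa using this
    have hP2 : ∀ x ∈ P.2, x ∈ Bs := fun x hx => by
      have := h2 x hx; simpa using this
    constructor
    · intro z hz w hw
      simp only [Finset.coe_union, Set.mem_union, Finset.mem_coe] at hz hw
      rcases hz with hz | hz <;> rcases hw with hw | hw
      · exact hi1 z hz w hw
      · exact he z (hP1 z hz) w (hP2 w hw)
      · exact fun h => he w (hP1 w hw) z (hP2 z hz) h.symm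
      · exact hi2 z hz w hw
    · intro x hx
      rw [Finset.mem_union] at hx
      rw [hT x]
      rcases hx with hx | hx
      · exact Or.inl (hP1 x hx)
      · exact Or.inr (hP2 x hx)
  · intro S hS
    simp only [Finset.mem_filter, Finset.mem_univ, true_and] at hS
    ext z
    simp only [Finset.mem_union, Finset.mem_filter]
    constructor
    · rintro (⟨h, _⟩ | ⟨h, _⟩) <;> exact h
    · intro hz
      have := (hT z).1 (hS.2 z hz)
      rcases this with h | h
      · exact Or.inl ⟨hz, h⟩
      · exact Or.inr ⟨hz, h⟩
  · intro P hP
    rw [Finset.mem_product] at hP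
    simp only [Finset.mem_filter, Finset.mem_univ, true_and] at hP
    obtain ⟨⟨hi1, h1⟩, ⟨hi2, h2⟩⟩ := hP
    have hP1 : ∀ x ∈ P.1, x ∈ A := fun x hx => by have := h1 x hx; simpa using this
    have hP2 : ∀ x ∈ P.2, x ∈ Bs := fun x hx => by have := h2 x hx; simpa using this
    have e1 : (P.1 ∪ P.2).filter (· ∈ A) = P.1 := by
      ext z
      simp only [Finset.mem_filter, Finset.mem_union]
      constructor
      · rintro ⟨hz | hz, hA⟩
        · exact hz
        · exact absurd (hP2 z hz) (hd z hA)
      · intro hz; exact ⟨Or.inl hz, hP1 z hz⟩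
    have e2 : (P.1 ∪ P.2).filter (· ∈ Bs) = P.2 := by
      ext z
      simp only [Finset.mem_filter, Finset.mem_union]
      constructor
      · rintro ⟨hz | hz, hB⟩
        · exact absurd hB (hd z (hP1 z hz))
        · exact hz
      · intro hz; exact ⟨Or.inr hz, hP2 z hz⟩
    rw [Prod.ext_iff]
    exact ⟨e1, e2⟩
  · intro S hS
    simp only [Finset.mem_filter, Finset.mem_univ, true_and] at hS
    have hsplit : S = S.filter (· ∈ A) ∪ S.filter (· ∈ Bs) := by
      ext z
      simp only [Finset.mem_union, Finset.mem_filter]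
      constructor
      · intro hz
        rcases (hT z).1 (hS.2 z hz) with h | h
        · exact Or.inl ⟨hz, h⟩
        · exact Or.inr ⟨hz, h⟩
      · rintro (⟨h, _⟩ | ⟨h, _⟩) <;> exact h
    have hdisj : Disjoint (S.filter (· ∈ A)) (S.filter (· ∈ Bs)) := by
      rw [Finset.disjoint_left]
      intro z hz1 hz2
      simp only [Finset.mem_filter] at hz1 hz2
      exact hd z hz1.2 hz2.2
    conv_lhs => rw [hsplit]
    exact Fterm_union hdisj

end IavLemmas3
set_option linter.unusedSectionVars false
section IavLemmas4

open MvPolynomial Classical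

variable {W : Type*} [Fintype W] (H : SimpleGraph W)

open Classical in
lemma Iav_partition {ι : Type*} [DecidableEq ι] (s : Finset ι) (A : ι → Set W) (T : Set W)
    (hd : ∀ i ∈ s, ∀ j ∈ s, i ≠ j → ∀ a ∈ A i, a ∉ A j)
    (he : ∀ i ∈ s, ∀ j ∈ s, i ≠ j → ∀ a ∈ A i, ∀ b ∈ A j, ¬H.Adj a b)
    (hT : ∀ z, z ∉ T ↔ ∃ i ∈ s, z ∈ A i) :
    Iav H T = ∏ i ∈ s, Iav H (A i)ᶜ := by
  induction s using Finset.induction_on generalizing T with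
  | empty =>
    rw [Finset.prod_empty]
    refine Iav_of_full H (fun z => ?_)
    by_contra h
    obtain ⟨i, hi, -⟩ := (hT z).1 h
    simp at hi
  | @insert i s' hnotmem ih =>
    rw [Finset.prod_insert hnotmem]
    have hsplit := Iav_split H T (A i) (⋃ j ∈ s', A j)
      (fun a ha => by
        simp only [Set.mem_iUnion, not_exists]
        intro j hj
        exact hd i (Finset.mem_insert_self i s') j (Finset.mem_insert_of_mem hj)
          (fun h => hnotmem (h ▸ hj)) a ha)
      (fun a ha b hb => by
        simp only [Set.mem_iUnion] at hb
        obtain ⟨j, hj, hb⟩ := hb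
        exact he i (Finset.mem_insert_self i s') j (Finset.mem_insert_of_mem hj)
          (fun h => hnotmem (h ▸ hj)) a ha b hb)
      (fun z => by
        rw [hT z]
        simp only [Finset.mem_insert, Set.mem_iUnion]
        constructor
        · rintro ⟨j, (rfl | hj), hz⟩
          · exact Or.inl hz
          · exact Or.inr ⟨j, hj, hz⟩
        · rintro (hz | ⟨j, hj, hz⟩)
          · exact ⟨i, Or.inl rfl, hz⟩
          · exact ⟨j, Or.inr hj, hz⟩)
    have hrest := ih ((⋃ j ∈ s', A j)ᶜ)
      (fun a ha b hb hab => hd a (Finset.mem_insert_of_mem ha) b (Finset.mem_insert_of_mem hb) hab)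
      (fun a ha b hb hab => he a (Finset.mem_insert_of_mem ha) b (Finset.mem_insert_of_mem hb) hab)
      (fun z => by
        simp only [Set.mem_compl_iff, not_not, Set.mem_iUnion, exists_prop])
    rw [hsplit, hrest]

open Classical in
lemma Iav_transfer {W' : Type*} [Fintype W'] (H' : SimpleGraph W') (f : W' → W)
    (hf : Function.Injective f) (hAdj : ∀ a b, H.Adj (f a) (f b) ↔ H'.Adj a b)
    (T : Set W) (T' : Set W') (hT : ∀ z, z ∉ T ↔ ∃ a, a ∉ T' ∧ f a = z) :
    Iav H T = MvPolynomial.rename f (Iav H' T') := by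
  rw [Iav_def, Iav_def, map_sum]
  have hterm : ∀ S' : Finset W',
      (MvPolynomial.rename f) (Fterm S') = Fterm (S'.image f) := by
    intro S'
    unfold Fterm
    rw [map_mul, map_pow, map_neg, map_one, map_prod]
    rw [Finset.card_image_of_injective _ hf, Finset.prod_image
      (fun a _ b _ h => hf h)]
    simp only [MvPolynomial.rename_X]
  rw [Finset.sum_congr rfl (fun S' _ => hterm S')]
  refine (Finset.sum_bij' (fun S' _ => S'.image f)
    (fun S _ => S.preimage f (hf.injOn)) ?_ ?_ ?_ ?_ ?_).symm
  · intro S' hS'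
    simp only [Finset.mem_filter, Finset.mem_univ, true_and] at hS' ⊢
    obtain ⟨hi, hTS⟩ := hS'
    constructor
    · intro z hz w hw
      simp only [Finset.coe_image, Set.mem_image, Finset.mem_coe] at hz hw
      obtain ⟨a, ha, rfl⟩ := hz
      obtain ⟨b, hb, rfl⟩ := hw
      rw [hAdj]
      exact hi a ha b hb
    · intro x hx
      rw [Finset.mem_image] at hx
      obtain ⟨a, ha, rfl⟩ := hx
      exact (hT (f a)).2 ⟨a, hTS a ha, rfl⟩
  · intro S hS
    simp only [Finset.mem_filter, Finset.mem_univ, true_and] at hS ⊢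
    obtain ⟨hi, hTS⟩ := hS
    constructor
    · intro z hz w hw
      simp only [Finset.coe_preimage, Set.mem_preimage, Finset.mem_coe] at hz hw
      rw [← hAdj]
      exact hi _ hz _ hw
    · intro x hx
      rw [Finset.mem_preimage] at hx
      intro hxT'
      obtain ⟨a, haT', hfa⟩ := (hT (f x)).1 (hTS _ hx)
      exact haT' (hf hfa ▸ hxT')
  · intro S' hS'
    ext a
    simp only [Finset.mem_preimage, Finset.mem_image]
    constructor
    · rintro ⟨b, hb, hfb⟩
      exact hf hfb ▸ hb
    · intro ha
      exact ⟨a, ha, rfl⟩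
  · intro S hS
    simp only [Finset.mem_filter, Finset.mem_univ, true_and] at hS
    ext z
    simp only [Finset.mem_image, Finset.mem_preimage]
    constructor
    · rintro ⟨a, ha, rfl⟩
      exact ha
    · intro hz
      obtain ⟨a, -, rfl⟩ := (hT z).1 (hS.2 z hz)
      exact ⟨a, hz, rfl⟩
  · intro S' hS'
    rfl

end IavLemmas4
set_option linter.unusedSectionVars false
section SPTside

open MvPolynomial Classical

variable {V : Type*} [Fintype V] [LinearOrder V] (G : SimpleGraph V)

lemma compIn_subset (B : Set V) (w : V) : compIn G B w ⊆ B := by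
  rintro y ⟨p, hp⟩
  exact hp y (SimpleGraph.Walk.end_mem_support p)

lemma mem_compIn_self {B : Set V} {w : V} (h : w ∈ B) : w ∈ compIn G B w :=
  ⟨SimpleGraph.Walk.nil, by simpa using h⟩

lemma compIn_adj {B : Set V} {w y z : V} (hy : y ∈ compIn G B w) (hz : z ∈ B)
    (hadj : G.Adj y z) : z ∈ compIn G B w := by
  obtain ⟨p, hp⟩ := hy
  refine ⟨p.concat hadj, ?_⟩
  intro a ha
  rw [SimpleGraph.Walk.support_concat, List.mem_append] at ha
  rcases ha with ha | ha
  · exact hp a ha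
  · simp only [List.mem_singleton] at ha
    exact ha ▸ hz

lemma nextSet_subset (B : Set V) (x w : V) : nextSet G B x w ⊆ B \ {x} := by
  intro z hz
  have := compIn_subset G _ _ hz
  simp only [Set.mem_diff, Set.mem_union, Set.mem_singleton_iff, not_or] at this ⊢
  exact ⟨this.1, this.2.1⟩

lemma mem_nextSet_self {B : Set V} {x w : V} (hw : w ∈ B) (hadj : G.Adj x w) :
    w ∈ nextSet G B x w := by
  apply mem_compIn_self
  simp only [Set.mem_diff, Set.mem_union, Set.mem_setOf_eq, Set.mem_singleton_iff, not_or]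
  exact ⟨hw, hadj.ne', fun h => absurd h.2.2 (lt_irrefl w)⟩

lemma sptFrom_strong : ∀ (rest : List V) (B : Set V) (x : V), sptFrom G B x rest →
    (∀ z ∈ rest, z ∈ B \ {x}) ∧ (x :: rest).Nodup := by
  intro rest
  induction rest with
  | nil => intro B x _; simp [List.Nodup]
  | cons w r ih =>
    intro B x h
    obtain ⟨hadj, hwB, hnext⟩ := h
    obtain ⟨hmem, hnd⟩ := ih (nextSet G B x w) w hnext
    have hsub := nextSet_subset G B x w
    have hmem' : ∀ z ∈ w :: r, z ∈ B \ {x} := by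
      intro z hz
      rcases List.mem_cons.1 hz with rfl | hz
      · exact ⟨hwB, by simp [hadj.ne']⟩
      · exact hsub (hmem z hz).1
    refine ⟨hmem', ?_⟩
    rw [List.nodup_cons]
    refine ⟨?_, hnd⟩
    intro hx
    have := hmem' x hx
    simp at this

/-- The relative stable-path tree vertex set. -/
def RVert (B : Set V) (x : V) :=
  {p : List V // p.Nodup ∧ ∃ rest, p = x :: rest ∧ sptFrom G B x rest}

noncomputable instance (B : Set V) (x : V) : Fintype (RVert G B x) :=
  Fintype.ofInjective (fun p => (⟨p.1, p.2.1⟩ : {l : List V // l.Nodup}))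
    (by rintro ⟨a, ha⟩ ⟨b, hb⟩ h; exact Subtype.ext (by simpa [Subtype.ext_iff] using h))

def RT (B : Set V) (x : V) : SimpleGraph (RVert G B x) :=
  SimpleGraph.fromRel (fun p q => q.1.length = p.1.length + 1 ∧ p.1 <+: q.1)

def RVroot (B : Set V) (x : V) : RVert G B x :=
  ⟨[x], by simp, ⟨[], rfl, trivial⟩⟩

def RVlabel {B : Set V} {x : V} (p : RVert G B x) : V :=
  p.1.getLast (by obtain ⟨-, rest, h, -⟩ := p.2; simp [h])

lemma RVert_ne_nil {B : Set V} {x : V} (p : RVert G B x) : p.1 ≠ [] := by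
  obtain ⟨-, rest, h, -⟩ := p.2; simp [h]

/-- Extension map from the subtree of the `w`-child. -/
def RVext {B : Set V} {x w : V} (hadj : G.Adj x w) (hw : w ∈ B)
    (p : RVert G (nextSet G B x w) w) : RVert G B x := by
  refine ⟨x :: p.1, ?_, p.1, rfl, ?_⟩
  · obtain ⟨hnd, rest, hrest, hspt⟩ := p.2
    rw [List.nodup_cons]
    refine ⟨?_, hnd⟩
    intro hx
    rw [hrest] at hx
    rcases List.mem_cons.1 hx with h | h
    · exact hadj.ne h
    · have := ((sptFrom_strong G rest _ w hspt).1 x h).1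
      have := (nextSet_subset G B x w this).2
      simp at this
  · obtain ⟨hnd, rest, hrest, hspt⟩ := p.2
    rw [hrest]
    exact ⟨hadj, hw, hspt⟩

lemma RVext_val {B : Set V} {x w : V} (hadj : G.Adj x w) (hw : w ∈ B)
    (p : RVert G (nextSet G B x w) w) : (RVext G hadj hw p).1 = x :: p.1 := rfl

lemma RVext_injective {B : Set V} {x w : V} (hadj : G.Adj x w) (hw : w ∈ B) :
    Function.Injective (RVext G hadj hw) := by
  intro p q h
  apply Subtype.ext
  have := congrArg Subtype.val h
  rw [RVext_val, RVext_val] at this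
  exact List.tail_eq_of_cons_eq this

lemma RVlabel_ext {B : Set V} {x w : V} (hadj : G.Adj x w) (hw : w ∈ B)
    (p : RVert G (nextSet G B x w) w) : RVlabel G (RVext G hadj hw p) = RVlabel G p := by
  unfold RVlabel
  exact List.getLast_cons (RVert_ne_nil G p)

/-- Classification of vertices of the relative tree. -/
lemma RV_cases {B : Set V} {x : V} (p : RVert G B x) :
    p = RVroot G B x ∨ ∃ w, ∃ (hadj : G.Adj x w), ∃ (hw : w ∈ B),
      ∃ (q : RVert G (nextSet G B x w) w), p = RVext G hadj hw q := by
  obtain ⟨hnd, rest, hrest, hspt⟩ := p.2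
  match rest, hrest, hspt with
  | [], hrest, _ => exact Or.inl (Subtype.ext (by rw [hrest]; rfl))
  | w :: r, hrest, hspt =>
    obtain ⟨hadj, hw, hnext⟩ := hspt
    refine Or.inr ⟨w, hadj, hw, ⟨w :: r, ?_, r, rfl, hnext⟩, Subtype.ext (by rw [hrest]; rfl)⟩
    have : p.1.Nodup := p.2.1
    rw [hrest] at this
    exact (List.nodup_cons.1 this).2

end SPTside
set_option linter.unusedSectionVars false
section SPTside2

open MvPolynomial Classical

variable {V : Type*} [Fintype V] [LinearOrder V] (G : SimpleGraph V)

@[simp] lemma RVroot_val {B : Set V} {x : V} : (RVroot G B x).1 = [x] := rfl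

lemma RVert_snd {B : Set V} {x w : V} (q : RVert G (nextSet G B x w) w) :
    ∃ r, q.1 = w :: r := by
  obtain ⟨-, r, hr, -⟩ := q.2
  exact ⟨r, hr⟩

lemma RT_adj_ext {B : Set V} {x w : V} (hadj : G.Adj x w) (hw : w ∈ B)
    (p q : RVert G (nextSet G B x w) w) :
    (RT G B x).Adj (RVext G hadj hw p) (RVext G hadj hw q) ↔
      (RT G (nextSet G B x w) w).Adj p q := by
  simp only [RT, SimpleGraph.fromRel_adj, RVext_val, List.length_cons,
    List.cons_prefix_cons, Nat.add_right_cancel_iff, true_and, ne_eq]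
  constructor
  · rintro ⟨hne, h⟩
    exact ⟨fun h' => hne (h' ▸ rfl), h⟩
  · rintro ⟨hne, h⟩
    refine ⟨fun h' => hne (RVext_injective G hadj hw h'), h⟩

lemma RT_no_cross {B : Set V} {x : V} {w w' : V} (hne : w ≠ w') {p q : RVert G B x}
    (hp : ∃ r, p.1 = x :: w :: r) (hq : ∃ r, q.1 = x :: w' :: r) :
    ¬ (RT G B x).Adj p q := by
  obtain ⟨r, hr⟩ := hp
  obtain ⟨r', hr'⟩ := hq
  rintro ⟨-, ⟨-, hpre⟩ | ⟨-, hpre⟩⟩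
  · rw [hr, hr', List.cons_prefix_cons, List.cons_prefix_cons] at hpre
    exact hne hpre.2.1
  · rw [hr, hr', List.cons_prefix_cons, List.cons_prefix_cons] at hpre
    exact hne hpre.2.1.symm

lemma RVroot_ne_ext {B : Set V} {x w : V} (hadj : G.Adj x w) (hw : w ∈ B)
    (q : RVert G (nextSet G B x w) w) : RVroot G B x ≠ RVext G hadj hw q := by
  intro h
  have := congrArg (fun p => (Subtype.val p : List V).length) h
  obtain ⟨r, hr⟩ := RVert_snd G q
  simp only [RVroot_val, RVext_val, List.length_cons, List.length_nil, hr] at this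
  omega

lemma RT_adj_root_ext {B : Set V} {x w : V} (hadj : G.Adj x w) (hw : w ∈ B)
    (q : RVert G (nextSet G B x w) w) :
    (RT G B x).Adj (RVroot G B x) (RVext G hadj hw q) ↔
      q = RVroot G (nextSet G B x w) w := by
  obtain ⟨r, hr⟩ := RVert_snd G q
  simp only [RT, SimpleGraph.fromRel_adj, ne_eq]
  constructor
  · rintro ⟨-, ⟨hlen, -⟩ | ⟨-, hpre⟩⟩
    · apply Subtype.ext
      simp only [RVext_val, RVroot_val, List.length_cons, List.length_nil, hr] at hlen
      rw [RVroot_val, hr]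
      have hr0 : r.length = 0 := by omega
      rw [List.length_eq_zero_iff] at hr0
      rw [hr0]
    · exfalso
      have := hpre.length_le
      obtain ⟨r2, hr2⟩ := RVert_snd G q
      simp only [RVext_val, RVroot_val, List.length_cons, List.length_nil,
        List.length_singleton, hr2] at this
      omega
  · intro h
    subst h
    refine ⟨RVroot_ne_ext G hadj hw _, Or.inl ⟨rfl, ?_⟩⟩
    simp only [RVext_val, RVroot_val]
    exact ⟨[w], rfl⟩

lemma RT_not_adj_root {B : Set V} {x : V} {p : RVert G B x}
    (hp : ∃ w r, p.1 = x :: w :: r ∧ r ≠ []) : ¬ (RT G B x).Adj (RVroot G B x) p := by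
  obtain ⟨w, r, hr, hrne⟩ := hp
  rintro ⟨-, ⟨hlen, -⟩ | ⟨-, hpre⟩⟩
  · simp only [RVroot_val, hr, List.length_cons, List.length_nil,
      List.length_singleton] at hlen
    have : r.length = 0 := by omega
    rw [List.length_eq_zero_iff] at this
    exact hrne this
  · have := hpre.length_le
    simp only [RVroot_val, hr, List.length_cons, List.length_nil,
      List.length_singleton] at this
    omega

open Classical in
noncomputable def eligF (B : Set V) (x : V) : Finset V :=
  Finset.univ.filter (fun w => G.Adj x w ∧ w ∈ B)

noncomputable def TP (B : Set V) (x : V) : MvPolynomial V ℂ :=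
  MvPolynomial.rename (RVlabel G) (Iav (RT G B x) ∅)

noncomputable def TQ (B : Set V) (x : V) : MvPolynomial V ℂ :=
  MvPolynomial.rename (RVlabel G) (Iav (RT G B x) {RVroot G B x})

lemma mem_eligF {B : Set V} {x w : V} : w ∈ eligF G B x ↔ G.Adj x w ∧ w ∈ B := by
  simp [eligF]

lemma transfer_tree {B : Set V} {x w : V} (hadj : G.Adj x w) (hw : w ∈ B)
    (T : Set (RVert G B x)) (T' : Set (RVert G (nextSet G B x w) w))
    (hT : ∀ z, z ∉ T ↔ ∃ a, a ∉ T' ∧ RVext G hadj hw a = z) :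
    MvPolynomial.rename (RVlabel G) (Iav (RT G B x) T)
      = MvPolynomial.rename (RVlabel G) (Iav (RT G (nextSet G B x w) w) T') := by
  rw [Iav_transfer (RT G B x) (RT G (nextSet G B x w) w) (RVext G hadj hw)
    (RVext_injective G hadj hw) (fun a b => RT_adj_ext G hadj hw a b) T T' hT]
  rw [MvPolynomial.rename_rename]
  have hcomp : RVlabel G ∘ RVext G hadj hw = RVlabel G :=
    funext (fun p => RVlabel_ext G hadj hw p)
  rw [hcomp]

end SPTside2
set_option linter.unusedSectionVars false
section SPTside3

open MvPolynomial Classical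

variable {V : Type*} [Fintype V] [LinearOrder V] (G : SimpleGraph V)

lemma val_ne_root {B : Set V} {x : V} {p : RVert G B x} {w : V} {r : List V}
    (hr : p.1 = x :: w :: r) : p ≠ RVroot G B x := by
  intro h
  rw [h, RVroot_val] at hr
  simp at hr

lemma TQ_eq (B : Set V) (x : V) :
    TQ G B x = ∏ w ∈ eligF G B x, TP G (nextSet G B x w) w := by
  unfold TQ TP
  have hpart := Iav_partition (RT G B x) (eligF G B x)
    (fun w => {p : RVert G B x | ∃ r, p.1 = x :: w :: r}) {RVroot G B x}
    ?_ ?_ ?_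
  · rw [hpart, map_prod]
    refine Finset.prod_congr rfl ?_
    intro w hwE
    obtain ⟨hadj, hw⟩ := (mem_eligF G).1 hwE
    refine transfer_tree G hadj hw _ ∅ ?_
    intro p
    simp only [Set.mem_compl_iff, Set.mem_setOf_eq, not_not, Set.mem_empty_iff_false,
      not_false_iff, true_and]
    constructor
    · rintro ⟨r, hr⟩
      rcases RV_cases G p with hroot | ⟨w', hadj', hw', q, rfl⟩
      · exact absurd hroot (val_ne_root G hr)
      · obtain ⟨r', hr'⟩ := RVert_snd G q
        have hww' : w' = w := by
          rw [RVext_val, hr'] at hr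
          have h2 : w' = w ∧ r' = r := by simpa using hr
          exact h2.1
        subst hww'
        exact ⟨q, rfl⟩
    · rintro ⟨q, rfl⟩
      obtain ⟨r', hr'⟩ := RVert_snd G q
      exact ⟨r', by rw [RVext_val, hr']⟩
  · -- disjointness
    rintro w - w' - hne p ⟨r, hr⟩ ⟨r', hr'⟩
    rw [hr] at hr'
    have h2 : w = w' ∧ r = r' := by simpa using hr'
    exact hne h2.1
  · -- no cross edges
    rintro w - w' - hne p hp q hq
    exact RT_no_cross G hne hp hq
  · -- covering
    intro p
    simp only [Set.mem_singleton_iff, Set.mem_setOf_eq]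
    constructor
    · intro hne
      rcases RV_cases G p with hroot | ⟨w, hadj, hw, q, rfl⟩
      · exact absurd hroot hne
      · obtain ⟨r, hr⟩ := RVert_snd G q
        exact ⟨w, (mem_eligF G).2 ⟨hadj, hw⟩, r, by rw [RVext_val, hr]⟩
    · rintro ⟨w, -, r, hr⟩
      exact val_ne_root G hr

lemma RVlabel_root {B : Set V} {x : V} : RVlabel G (RVroot G B x) = x := rfl

lemma TP_eq (B : Set V) (x : V) :
    TP G B x = TQ G B x
      - MvPolynomial.X x * ∏ w ∈ eligF G B x, TQ G (nextSet G B x w) w := by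
  have hdel := Iav_deletion (RT G B x) ∅ (RVroot G B x) (Set.notMem_empty _)
  rw [Set.empty_union] at hdel
  have hins : (insert (RVroot G B x) (∅ : Set (RVert G B x))) = {RVroot G B x} := by
    simp
  rw [hins] at hdel
  unfold TP TQ
  rw [hdel, map_sub, map_mul, MvPolynomial.rename_X, RVlabel_root]
  congr 1
  congr 1
  have hpart := Iav_partition (RT G B x) (eligF G B x)
    (fun w => {p : RVert G B x | ∃ r, p.1 = x :: w :: r ∧ r ≠ []})
    {b | b = RVroot G B x ∨ (RT G B x).Adj (RVroot G B x) b} ?_ ?_ ?_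
  · rw [hpart, map_prod]
    refine Finset.prod_congr rfl ?_
    intro w hwE
    obtain ⟨hadj, hw⟩ := (mem_eligF G).1 hwE
    refine transfer_tree G hadj hw _ {RVroot G (nextSet G B x w) w} ?_
    intro p
    simp only [Set.mem_compl_iff, Set.mem_setOf_eq, not_not, Set.mem_singleton_iff]
    constructor
    · rintro ⟨r, hr, hrne⟩
      rcases RV_cases G p with hroot | ⟨w', hadj', hw', q, rfl⟩
      · exact absurd hroot (val_ne_root G hr)
      · obtain ⟨r', hr'⟩ := RVert_snd G q
        have hww' : w' = w := by
          rw [RVext_val, hr'] at hr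
          have h2 : w' = w ∧ r' = r := by simpa using hr
          exact h2.1
        subst hww'
        refine ⟨q, ?_, rfl⟩
        intro hq
        rw [RVext_val, hq, RVroot_val] at hr
        injection hr with _ h2
        injection h2 with _ h3
        exact hrne h3.symm
    · rintro ⟨q, hqne, rfl⟩
      obtain ⟨r', hr'⟩ := RVert_snd G q
      refine ⟨r', by rw [RVext_val, hr'], ?_⟩
      rintro rfl
      exact hqne (Subtype.ext (by rw [hr']; rfl))
  · rintro w - w' - hne p ⟨r, hr, -⟩ ⟨r', hr', -⟩
    rw [hr] at hr'
    have h2 : w = w' ∧ r = r' := by simpa using hr'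
    exact hne h2.1
  · rintro w - w' - hne p ⟨r, hr, -⟩ q ⟨r', hr', -⟩
    exact RT_no_cross G hne ⟨r, hr⟩ ⟨r', hr'⟩
  · intro p
    simp only [Set.mem_setOf_eq, not_or]
    constructor
    · rintro ⟨hne, hnadj⟩
      rcases RV_cases G p with hroot | ⟨w, hadj, hw, q, rfl⟩
      · exact absurd hroot hne
      · obtain ⟨r, hr⟩ := RVert_snd G q
        refine ⟨w, (mem_eligF G).2 ⟨hadj, hw⟩, r, by rw [RVext_val, hr], ?_⟩
        rintro rfl
        exact hnadj ((RT_adj_root_ext G hadj hw q).2 (Subtype.ext (by rw [hr]; rfl)))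
    · rintro ⟨w, -, r, hr, hrne⟩
      exact ⟨val_ne_root G hr, RT_not_adj_root G ⟨w, r, hr, hrne⟩⟩

end SPTside3
set_option linter.unusedSectionVars false
section SPTside4

open MvPolynomial Classical

variable {V : Type*} [Fintype V] [LinearOrder V] (G : SimpleGraph V)

/-- The ground set for the component of the `w`-branch. -/
def Dset (B : Set V) (x w : V) : Set V := B \ ({x} ∪ {z ∈ B | G.Adj x z ∧ z < w})

lemma nextSet_eq_compIn (B : Set V) (x w : V) :
    nextSet G B x w = compIn G (Dset G B x w) w := rfl

/-- Splitting off the component of `w`. -/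
lemma split_comp (B : Set V) (x w : V) (S : Set V) :
    Iav G ((Dset G B x w) \ S)ᶜ
      = Iav G ((nextSet G B x w) \ S)ᶜ
        * Iav G (((Dset G B x w) \ (nextSet G B x w)) \ S)ᶜ := by
  have hCD : nextSet G B x w ⊆ Dset G B x w := compIn_subset G _ _
  apply Iav_split
  · rintro a ⟨haC, haS⟩
    rintro (⟨⟨-, haC'⟩, -⟩)
    exact haC' haC
  · rintro a ⟨haC, -⟩ b ⟨⟨hbD, hbC⟩, -⟩ hadj
    exact hbC (compIn_adj G haC hbD hadj)
  · intro z
    simp only [Set.mem_compl_iff, not_not, Set.mem_diff]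
    constructor
    · rintro ⟨hzD, hzS⟩
      by_cases hzC : z ∈ nextSet G B x w
      · exact Or.inl ⟨hzC, hzS⟩
      · exact Or.inr ⟨⟨hzD, hzC⟩, hzS⟩
    · rintro (⟨hzC, hzS⟩ | ⟨⟨hzD, -⟩, hzS⟩)
      · exact ⟨hCD hzC, hzS⟩
      · exact ⟨hzD, hzS⟩

lemma telescope (B : Set V) (x : V) (E : Finset V) :
    E ⊆ eligF G B x → (∀ z ∈ eligF G B x, ∀ w ∈ E, w ≤ z → z ∈ E) →
    Iav G (B \ ({x} ∪ {z | z ∈ eligF G B x ∧ z ∉ E}))ᶜ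
        * ∏ w ∈ E, Iav G ((nextSet G B x w) \ {w})ᶜ
      = Iav G (B \ ({x} ∪ {z | z ∈ eligF G B x}))ᶜ
        * ∏ w ∈ E, Iav G (nextSet G B x w)ᶜ := by
  induction E using Finset.induction_on_min with
  | empty =>
    intro _ _
    simp only [Finset.prod_empty, mul_one]
    congr 2
    ext z
    simp only [Set.mem_diff, Set.mem_union, Set.mem_setOf_eq, Finset.notMem_empty,
      not_false_iff, and_true]
  | insert a s hmin ih =>
    intro hsub hfinal
    have haE : a ∈ eligF G B x := hsub (Finset.mem_insert_self a s)
    obtain ⟨hadj, haB⟩ := (mem_eligF G).1 haE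
    have hanotins : a ∉ s := fun h => absurd (hmin a h) (lt_irrefl a)
    have hsub' : s ⊆ eligF G B x := fun z hz => hsub (Finset.mem_insert_of_mem hz)
    have hfinal' : ∀ z ∈ eligF G B x, ∀ w ∈ s, w ≤ z → z ∈ s := by
      intro z hz w hw hwz
      have hz' := hfinal z hz w (Finset.mem_insert_of_mem hw) hwz
      rcases Finset.mem_insert.1 hz' with rfl | h
      · exact absurd (lt_of_lt_of_le (hmin w hw) hwz) (lt_irrefl _)
      · exact h
    have key1 : B \ ({x} ∪ {z | z ∈ eligF G B x ∧ z ∉ insert a s}) = Dset G B x a := by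
      ext z
      simp only [Dset, Set.mem_diff, Set.mem_union, Set.mem_singleton_iff,
        Set.mem_setOf_eq, not_or]
      constructor
      · rintro ⟨hzB, hzx, hz⟩
        refine ⟨hzB, hzx, ?_⟩
        rintro ⟨hzB', hadj', hlt⟩
        refine hz ⟨(mem_eligF G).2 ⟨hadj', hzB'⟩, ?_⟩
        intro hzE
        rcases Finset.mem_insert.1 hzE with rfl | hzs
        · exact absurd hlt (lt_irrefl _)
        · exact absurd (lt_trans (hmin z hzs) hlt) (lt_irrefl _)
      · rintro ⟨hzB, hzx, hz⟩
        refine ⟨hzB, hzx, ?_⟩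
        rintro ⟨hzE, hzins⟩
        obtain ⟨hadj', hzB'⟩ := (mem_eligF G).1 hzE
        rcases lt_trichotomy z a with hlt | rfl | hgt
        · exact hz ⟨hzB', hadj', hlt⟩
        · exact hzins (Finset.mem_insert_self _ _)
        · exact hzins (hfinal z hzE a (Finset.mem_insert_self a s) (le_of_lt hgt))
    have haD : a ∈ Dset G B x a := by
      simp only [Dset, Set.mem_diff, Set.mem_union, Set.mem_singleton_iff,
        Set.mem_setOf_eq, not_or]
      exact ⟨haB, hadj.ne', fun h => absurd h.2.2 (lt_irrefl _)⟩
    have haC : a ∈ nextSet G B x a := mem_compIn_self G haD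
    have key2 : Dset G B x a \ {a} = B \ ({x} ∪ {z | z ∈ eligF G B x ∧ z ∉ s}) := by
      ext z
      simp only [Dset, Set.mem_diff, Set.mem_union, Set.mem_singleton_iff,
        Set.mem_setOf_eq, not_or]
      constructor
      · rintro ⟨⟨hzB, hzx, hz⟩, hza⟩
        refine ⟨hzB, hzx, ?_⟩
        rintro ⟨hzE, hzs⟩
        obtain ⟨hadj', hzB'⟩ := (mem_eligF G).1 hzE
        rcases lt_trichotomy z a with hlt | rfl | hgt
        · exact hz ⟨hzB', hadj', hlt⟩
        · exact hza rfl
        · rcases Finset.mem_insert.1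
              (hfinal z hzE a (Finset.mem_insert_self a s) (le_of_lt hgt)) with rfl | h
          · exact absurd hgt (lt_irrefl _)
          · exact hzs h
      · rintro ⟨hzB, hzx, hz⟩
        have hza : z ≠ a := by
          rintro rfl
          exact hz ⟨haE, hanotins⟩
        refine ⟨⟨hzB, hzx, ?_⟩, hza⟩
        rintro ⟨hzB', hadj', hlt⟩
        have hzE : z ∈ eligF G B x := (mem_eligF G).2 ⟨hadj', hzB'⟩
        have hzs : z ∈ s := by
          by_contra hzs
          exact hz ⟨hzE, hzs⟩
        exact absurd (lt_trans (hmin z hzs) hlt) (lt_irrefl _)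
    have s1 : Iav G (Dset G B x a)ᶜ
        = Iav G (nextSet G B x a)ᶜ * Iav G ((Dset G B x a) \ (nextSet G B x a))ᶜ := by
      have := split_comp G B x a ∅
      simpa [Set.diff_empty] using this
    have hDCa : ((Dset G B x a) \ (nextSet G B x a)) \ {a}
        = (Dset G B x a) \ (nextSet G B x a) := by
      ext z
      simp only [Set.mem_diff, Set.mem_singleton_iff]
      constructor
      · rintro ⟨h, -⟩; exact h
      · rintro ⟨hzD, hzC⟩
        exact ⟨⟨hzD, hzC⟩, fun h => hzC (h ▸ haC)⟩
    have s2 : Iav G (B \ ({x} ∪ {z | z ∈ eligF G B x ∧ z ∉ s}))ᶜ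
        = Iav G ((nextSet G B x a) \ {a})ᶜ
          * Iav G ((Dset G B x a) \ (nextSet G B x a))ᶜ := by
      rw [← key2]
      have := split_comp G B x a {a}
      rw [hDCa] at this
      exact this
    have ihe := ih hsub' hfinal'
    rw [Finset.prod_insert hanotins, Finset.prod_insert hanotins, key1, s1]
    linear_combination (Iav G (nextSet G B x a)ᶜ) * ihe
      - (Iav G (nextSet G B x a)ᶜ * ∏ w ∈ s, Iav G ((nextSet G B x w) \ {w})ᶜ) * s2

end SPTside4
set_option linter.unusedSectionVars false
section SPTside5

open MvPolynomial Classical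

variable {V : Type*} [Fintype V] [LinearOrder V] (G : SimpleGraph V)

lemma MAIN : ∀ (n : ℕ) (B : Set V) (x : V), B.ncard = n → x ∈ B →
    Iav G (B \ {x})ᶜ * TP G B x = Iav G Bᶜ * TQ G B x := by
  intro n
  induction n using Nat.strong_induction_on with
  | _ n ih =>
    intro B x hn hx
    have hdel := Iav_deletion G Bᶜ x (by simp [hx])
    have hins : insert x Bᶜ = (B \ {x})ᶜ := by
      ext z
      simp only [Set.mem_insert_iff, Set.mem_compl_iff, Set.mem_diff,
        Set.mem_singleton_iff]
      tauto
    have hN : Bᶜ ∪ {b | b = x ∨ G.Adj x b}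
        = (B \ ({x} ∪ {z | z ∈ eligF G B x}))ᶜ := by
      ext z
      simp only [Set.mem_union, Set.mem_compl_iff, Set.mem_setOf_eq, Set.mem_diff,
        Set.mem_singleton_iff, mem_eligF]
      tauto
    rw [hins, hN] at hdel
    have htel := telescope G B x (eligF G B x) (fun z hz => hz)
      (fun z hz _ _ _ => hz)
    have hEmpty : B \ ({x} ∪ {z | z ∈ eligF G B x ∧ z ∉ eligF G B x}) = B \ {x} := by
      ext z
      simp only [Set.mem_diff, Set.mem_union, Set.mem_setOf_eq, Set.mem_singleton_iff]
      tauto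
    rw [hEmpty] at htel
    have hIH : ∀ w ∈ eligF G B x,
        Iav G ((nextSet G B x w) \ {w})ᶜ * TP G (nextSet G B x w) w
          = Iav G (nextSet G B x w)ᶜ * TQ G (nextSet G B x w) w := by
      intro w hw
      obtain ⟨hadj, hwB⟩ := (mem_eligF G).1 hw
      have hwC : w ∈ nextSet G B x w := mem_nextSet_self G hwB hadj
      have hlt : (nextSet G B x w).ncard < n := by
        rw [← hn]
        calc (nextSet G B x w).ncard
            ≤ (B \ {x}).ncard :=
              Set.ncard_le_ncard (nextSet_subset G B x w) (Set.toFinite _)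
          _ < B.ncard := Set.ncard_diff_singleton_lt_of_mem hx (Set.toFinite _)
      exact ih _ hlt _ w rfl hwC
    have hprod : (∏ w ∈ eligF G B x, Iav G ((nextSet G B x w) \ {w})ᶜ)
          * ∏ w ∈ eligF G B x, TP G (nextSet G B x w) w
        = (∏ w ∈ eligF G B x, Iav G (nextSet G B x w)ᶜ)
          * ∏ w ∈ eligF G B x, TQ G (nextSet G B x w) w := by
      rw [← Finset.prod_mul_distrib, ← Finset.prod_mul_distrib]
      exact Finset.prod_congr rfl hIH
    have hcne : (∏ w ∈ eligF G B x, Iav G (nextSet G B x w)ᶜ) ≠ 0 :=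
      Finset.prod_ne_zero_iff.2 (fun w _ => Iav_ne_zero _ _)
    have hkey : Iav G (B \ {x})ᶜ * ∏ w ∈ eligF G B x, TQ G (nextSet G B x w) w
        = Iav G (B \ ({x} ∪ {z | z ∈ eligF G B x}))ᶜ
          * ∏ w ∈ eligF G B x, TP G (nextSet G B x w) w := by
      apply mul_right_cancel₀ hcne
      linear_combination (-(Iav G (B \ {x})ᶜ)) * hprod
        + (∏ w ∈ eligF G B x, TP G (nextSet G B x w) w) * htel
    rw [TP_eq, TQ_eq, hdel]
    linear_combination (-(MvPolynomial.X x : MvPolynomial V ℂ)) * hkey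

end SPTside5
set_option linter.unusedSectionVars false
section SPTside6

open MvPolynomial Classical

variable {V : Type*} [Fintype V] [LinearOrder V] (G : SimpleGraph V)

def toSP {u : V} (p : RVert G Set.univ u) : SPVert G u :=
  ⟨p.1, p.2.1, p.2.2⟩

lemma toSP_val {u : V} (p : RVert G Set.univ u) : (toSP G p).1 = p.1 := rfl

lemma toSP_injective {u : V} : Function.Injective (toSP G (u := u)) := by
  intro a b h
  exact Subtype.ext (congrArg Subtype.val h)

lemma toSP_surjective {u : V} : Function.Surjective (toSP G (u := u)) := by
  intro q
  exact ⟨⟨q.1, q.2.1, q.2.2⟩, rfl⟩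

lemma toSP_adj {u : V} (a b : RVert G Set.univ u) :
    (SPT G u).Adj (toSP G a) (toSP G b) ↔ (RT G Set.univ u).Adj a b := by
  simp only [SPT, RT, SimpleGraph.fromRel_adj, toSP_val, ne_eq]
  constructor
  · rintro ⟨hne, h⟩
    exact ⟨fun h' => hne (h' ▸ rfl), h⟩
  · rintro ⟨hne, h⟩
    exact ⟨fun h' => hne (toSP_injective G h'), h⟩

lemma toSP_root {u : V} : toSP G (RVroot G Set.univ u) = SPTroot G u := rfl

lemma SPTlabel_toSP {u : V} : (SPTlabel ∘ toSP G (u := u)) = RVlabel G := by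
  funext p
  rfl

theorem stmt_12' {V : Type*} [Fintype V] [LinearOrder V] (G : SimpleGraph V)
    (hG : G.Connected) (u : V) :
    Iav G ({u} : Set V) *
        MvPolynomial.rename (SPTlabel : SPVert G u → V) (Iav (SPT G u) ∅) =
      Iav G (∅ : Set V) *
        MvPolynomial.rename (SPTlabel : SPVert G u → V)
          (Iav (SPT G u) ({SPTroot G u} : Set (SPVert G u))) := by
  have t1 : Iav (SPT G u) (∅ : Set (SPVert G u))
      = MvPolynomial.rename (toSP G) (Iav (RT G Set.univ u) ∅) := by
    apply Iav_transfer (SPT G u) (RT G Set.univ u) (toSP G) (toSP_injective G)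
      (toSP_adj G)
    intro z
    simp only [Set.mem_empty_iff_false, not_false_iff, true_iff]
    obtain ⟨a, ha⟩ := toSP_surjective G z
    exact ⟨a, trivial, ha⟩
  have t2 : Iav (SPT G u) ({SPTroot G u} : Set (SPVert G u))
      = MvPolynomial.rename (toSP G) (Iav (RT G Set.univ u) {RVroot G Set.univ u}) := by
    apply Iav_transfer (SPT G u) (RT G Set.univ u) (toSP G) (toSP_injective G)
      (toSP_adj G)
    intro z
    simp only [Set.mem_singleton_iff]
    constructor
    · intro hz
      obtain ⟨a, ha⟩ := toSP_surjective G z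
      exact ⟨a, fun h => hz (by rw [← ha, h, toSP_root]), ha⟩
    · rintro ⟨a, haroot, rfl⟩
      intro h
      apply haroot
      apply toSP_injective G
      rw [toSP_root]
      exact h
  have hmain := MAIN G (Set.univ.ncard) Set.univ u rfl (Set.mem_univ u)
  have e1 : ((Set.univ : Set V) \ {u})ᶜ = ({u} : Set V) := by
    ext z; simp
  have e2 : (Set.univ : Set V)ᶜ = (∅ : Set V) := Set.compl_univ
  rw [e1, e2] at hmain
  unfold TP TQ at hmain
  rw [t1, t2, MvPolynomial.rename_rename, MvPolynomial.rename_rename, SPTlabel_toSP]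
  exact hmain

end SPTside6


/-- The multivariate Godsil identity:
`I(G-u,x) · ℓ_G(I(T_G,x)) = I(G,x) · ℓ_G(I(T_G - u', x))`. -/
theorem stmt_12 {V : Type*} [Fintype V] [LinearOrder V] (G : SimpleGraph V)
    (hG : G.Connected) (u : V) :
    Iav G ({u} : Set V) *
        MvPolynomial.rename (SPTlabel : SPVert G u → V) (Iav (SPT G u) ∅) =
      Iav G (∅ : Set V) *
        MvPolynomial.rename (SPTlabel : SPVert G u → V)
          (Iav (SPT G u) ({SPTroot G u} : Set (SPVert G u))) :=
  stmt_12' G hG u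
end
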